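/- There is no positive integer n such that σ(n)/n = 5/4. -/

import Mathlib

theorem no_abundancy_five_fourths :
    ¬ ∃ n : ℕ, 0 < n ∧ (ArithmeticFunction.sigma 1 n : ℚ) / n = 5 / 4 := by
  rintro ⟨n, hn, h⟩
  have hn' : (n : ℚ) ≠ 0 := Nat.cast_ne_zero.mpr hn.ne'
  have hσ : 4 * (ArithmeticFunction.sigma 1 n) = 5 * n := by
    field_simp at h
    have h' : ((4 * ArithmeticFunction.sigma 1 n : ℕ) : ℚ) = ((5 * n : ℕ) : ℚ) := by
      push_cast; linarith
    exact_mod_cast h'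
  have h4 : (4 : ℕ) ∣ n := by
    have : (4 : ℕ) ∣ 5 * n := ⟨ArithmeticFunction.sigma 1 n, by omega⟩
    exact (Nat.Coprime.dvd_of_dvd_mul_left (by decide) this)
  obtain ⟨m, rfl⟩ := h4
  have hm : 0 < m := by omega
  have hσm : ArithmeticFunction.sigma 1 (4 * m) = 5 * m := by omega
  rw [ArithmeticFunction.sigma_one_apply] at hσm
  rcases eq_or_lt_of_le (show 1 ≤ m by omega) with hm1 | hm2
  · rw [← hm1] at hσm
    revert hσm; decide
  · -- m ≥ 2, so 1, m, 4*m are distinct divisors of 4*m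
    have hsub : ({1, m, 4 * m} : Finset ℕ) ⊆ (4 * m).divisors := by
      intro d hd
      simp only [Finset.mem_insert, Finset.mem_singleton] at hd
      rw [Nat.mem_divisors]
      rcases hd with rfl | rfl | rfl
      · exact ⟨one_dvd _, by omega⟩
      · exact ⟨⟨4, by ring⟩, by omega⟩
      · exact ⟨dvd_refl _, by omega⟩
    have hsum : ∑ d ∈ ({1, m, 4 * m} : Finset ℕ), d = 1 + m + 4 * m := by
      rw [Finset.sum_insert (by simp; omega), Finset.sum_insert (by simp; omega),
        Finset.sum_singleton]
      ring
    have hle : ∑ d ∈ ({1, m, 4 * m} : Finset ℕ), d ≤ ∑ d ∈ (4 * m).divisors, d :=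
      Finset.sum_le_sum_of_subset hsub
    omega
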